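/- Let α be irrational and let T : S¹ → S¹, Tx = x + α mod 1, be the corresponding ergodic circle rotation on S¹ = ℝ/ℤ with Lebesgue (Haar) probability measure, with Koopman operator 𝒰 f = f∘T on L²(S¹; ℂ). Then the set of cyclic vectors of 𝒰 contains a dense Gδ subset of L²(S¹; ℂ). -/

import Mathlib

open MeasureTheory Filter

/-- The Koopman operator `𝒰_T : g ↦ g ∘ T` on `L²_μ`. -/
noncomputable def koopman {X : Type*} [MeasurableSpace X] {μ : Measure X}
    (T : X → X) (hT : MeasurePreserving T μ μ) : Lp ℂ 2 μ →L[ℂ] Lp ℂ 2 μ :=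
  (Lp.compMeasurePreservingₗᵢ ℂ T hT).toContinuousLinearMap

/-- `g` is a cyclic vector of a bounded operator `U` on `L²_μ`. -/
def IsCyclicVector {X : Type*} [MeasurableSpace X] {μ : Measure X}
    (U : Lp ℂ 2 μ →L[ℂ] Lp ℂ 2 μ) (g : Lp ℂ 2 μ) : Prop :=
  (Submodule.span ℂ (Set.range fun n : ℕ => (U ^ n) g)).topologicalClosure = ⊤

/-- The ergodic circle rotation `x ↦ x + α (mod 1)` on `S¹ = ℝ/ℤ`. -/
noncomputable def circleRotation (a : ℝ) : UnitAddCircle → UnitAddCircle :=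
  fun x => x + (a : UnitAddCircle)

lemma circleRotation_measurePreserving (a : ℝ) :
    MeasurePreserving (circleRotation a) volume volume :=
  measurePreserving_add_right volume _

noncomputable section CyclicAux
namespace CyclicAux
open AddCircle Complex Submodule
open scoped InnerProductSpace Topology

abbrev H : Type := Lp ℂ 2 (haarAddCircle : Measure UnitAddCircle)

def lam (a : ℝ) (n : ℤ) : ℂ := fourier n (a : UnitAddCircle)

lemma abs_lam (a : ℝ) (n : ℤ) : ‖lam a n‖ = 1 := by
  rw [lam, fourier_apply]; exact Circle.norm_coe _

lemma conj_mul_lam (a : ℝ) (n : ℤ) : (starRingEnd ℂ) (lam a n) * lam a n = 1 := by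
  rw [← Complex.normSq_eq_conj_mul_self, Complex.normSq_eq_norm_sq, abs_lam]
  norm_num

lemma lam_ne_one (a : ℝ) (ha : Irrational a) {k : ℤ} (hk : k ≠ 0) : lam a k ≠ 1 := by
  rw [lam, fourier_coe_apply]
  intro h
  rw [Complex.exp_eq_one_iff] at h
  obtain ⟨j, hj⟩ := h
  rw [Complex.ofReal_one, div_one] at hj
  have h2 : (2 * Real.pi : ℂ) * Complex.I ≠ 0 := by
    simp [Real.pi_ne_zero, Complex.I_ne_zero, Complex.ofReal_ne_zero]
  have hka : (k : ℂ) * a = j := by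
    apply mul_left_cancel₀ h2
    linear_combination hj
  have hkr : (k : ℝ) * a = j := by exact_mod_cast hka
  have hae : a = (j : ℝ) / (k : ℝ) := by
    field_simp
    linarith [hkr]
  have : (((j : ℚ) / (k : ℚ) : ℚ) : ℝ) = (j : ℝ) / (k : ℝ) := by push_cast; ring
  exact Rat.not_irrational _ (by rwa [hae, ← this] at ha)

variable (a : ℝ) (hT : MeasurePreserving (circleRotation a) haarAddCircle haarAddCircle)

local notation "U" => koopman (circleRotation a) hT
local notation "b" => (fourierBasis (T := 1))

lemma U_eig (n : ℤ) : U (b n) = lam a n • b n := by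
  rw [show (b n : H) = fourierLp 2 n from congrFun coe_fourierBasis n]
  show Lp.compMeasurePreserving _ hT _ = _
  apply Lp.ext
  have h1 := Lp.coeFn_compMeasurePreserving (fourierLp 2 n) hT
  have h2 := coeFn_fourierLp (T := 1) 2 n
  have h3 : (fourierLp 2 n : UnitAddCircle → ℂ) ∘ circleRotation a
      =ᵐ[haarAddCircle] (fourier n : UnitAddCircle → ℂ) ∘ circleRotation a :=
    h2.comp_tendsto hT.quasiMeasurePreserving.tendsto_ae
  have h4 := Lp.coeFn_smul (lam a n) (fourierLp (T := 1) 2 n)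
  filter_upwards [h1, h3, h4, h2] with x hx1 hx3 hx4 hx2
  rw [hx1, hx4]
  show (fourierLp 2 n : UnitAddCircle → ℂ) (circleRotation a x) = lam a n • _
  rw [show ((fourierLp 2 n : UnitAddCircle → ℂ)) (circleRotation a x)
      = fourier n (circleRotation a x) from hx3, hx2]
  show fourier n (x + (a : UnitAddCircle)) = lam a n • fourier n x
  rw [lam, smul_eq_mul, fourier_apply, fourier_apply, fourier_apply, smul_add, toCircle_add,
    Circle.coe_mul, mul_comm]

lemma U_pow_eig (k : ℕ) (n : ℤ) : (U ^ k) (b n) = (lam a n) ^ k • b n := by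
  induction k with
  | zero => simp
  | succ k ih =>
    rw [pow_succ', ContinuousLinearMap.mul_apply, ih, _root_.map_smul, U_eig, smul_smul, pow_succ', mul_comm]

lemma inner_U_map_map (f g : H) : ⟪U f, U g⟫_ℂ = ⟪f, g⟫_ℂ :=
  (Lp.compMeasurePreservingₗᵢ ℂ _ hT).inner_map_map f g

lemma inner_U_pow_map_map (k : ℕ) (f g : H) : ⟪(U ^ k) f, (U ^ k) g⟫_ℂ = ⟪f, g⟫_ℂ := by
  induction k with
  | zero => simp
  | succ k ih =>
    rw [pow_succ', ContinuousLinearMap.mul_apply, ContinuousLinearMap.mul_apply,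
      inner_U_map_map, ih]

lemma norm_U_pow (k : ℕ) (f : H) : ‖(U ^ k) f‖ = ‖f‖ := by
  induction k with
  | zero => simp
  | succ k ih =>
    rw [pow_succ', ContinuousLinearMap.mul_apply,
      show ∀ g : H, ‖U g‖ = ‖g‖ from fun g =>
        (Lp.compMeasurePreservingₗᵢ ℂ _ hT).norm_map g, ih]

lemma inner_U_pow (k : ℕ) (n : ℤ) (g : H) :
    ⟪(b n : H), (U ^ k) g⟫_ℂ = (lam a n) ^ k * ⟪(b n : H), g⟫_ℂ := by
  have hb : (b n : H) = (starRingEnd ℂ) ((lam a n) ^ k) • ((U ^ k) (b n)) := by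
    rw [U_pow_eig, smul_smul, map_pow, ← mul_pow, conj_mul_lam, one_pow, one_smul]
  conv_lhs => rw [hb]
  rw [inner_smul_left, Complex.conj_conj, inner_U_pow_map_map]


def P (m : ℤ) : H →L[ℂ] H := (innerSL ℂ (b m)).smulRight (b m)

lemma P_apply (m : ℤ) (h : H) : P m h = ⟪(b m : H), h⟫_ℂ • b m := rfl

lemma norm_b (n : ℤ) : ‖(b n : H)‖ = 1 := fourierBasis.orthonormal.1 n

lemma norm_P_le (m : ℤ) (h : H) : ‖P m h‖ ≤ ‖h‖ := by
  rw [P_apply, norm_smul, norm_b, mul_one]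
  calc ‖⟪(b m : H), h⟫_ℂ‖ ≤ ‖(b m : H)‖ * ‖h‖ := norm_inner_le_norm _ _
  _ = ‖h‖ := by rw [norm_b, one_mul]

def A (m : ℤ) (N : ℕ) : H →L[ℂ] H :=
  (N : ℂ)⁻¹ • ∑ k ∈ Finset.range N, ((starRingEnd ℂ) (lam a m)) ^ k • (U ^ k)

lemma A_apply (m : ℤ) (N : ℕ) (h : H) :
    A a hT m N h = (N : ℂ)⁻¹ • ∑ k ∈ Finset.range N,
      ((starRingEnd ℂ) (lam a m)) ^ k • (U ^ k) h := by
  simp [A, ContinuousLinearMap.sum_apply]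

lemma norm_A_le (m : ℤ) (N : ℕ) (h : H) : ‖A a hT m N h‖ ≤ ‖h‖ := by
  rw [A_apply, norm_smul]
  have h1 : ‖∑ k ∈ Finset.range N, ((starRingEnd ℂ) (lam a m)) ^ k • (U ^ k) h‖
      ≤ N * ‖h‖ := by
    calc ‖∑ k ∈ Finset.range N, ((starRingEnd ℂ) (lam a m)) ^ k • (U ^ k) h‖
        ≤ ∑ k ∈ Finset.range N, ‖((starRingEnd ℂ) (lam a m)) ^ k • (U ^ k) h‖ :=
          norm_sum_le _ _
      _ = ∑ k ∈ Finset.range N, ‖h‖ := by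
          refine Finset.sum_congr rfl fun k _ => ?_
          rw [norm_smul, norm_U_pow, norm_pow]
          have : ‖(starRingEnd ℂ) (lam a m)‖ = 1 := by
            rw [RCLike.norm_conj]
            exact abs_lam a m
          rw [this, one_pow, one_mul]
      _ = N * ‖h‖ := by rw [Finset.sum_const, Finset.card_range, nsmul_eq_mul]
  calc ‖(N : ℂ)⁻¹‖ * ‖∑ k ∈ Finset.range N, ((starRingEnd ℂ) (lam a m)) ^ k • (U ^ k) h‖
      ≤ ‖(N : ℂ)⁻¹‖ * (N * ‖h‖) := by
        apply mul_le_mul_of_nonneg_left h1 (norm_nonneg _)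
    _ ≤ ‖h‖ := by
        rw [norm_inv, Complex.norm_natCast]
        rcases Nat.eq_zero_or_pos N with hN | hN
        · subst hN; simp
        · rw [← mul_assoc, inv_mul_cancel₀ (by positivity), one_mul]

lemma A_tendsto_basis (ha : Irrational a) (m n : ℤ) :
    Tendsto (fun N => A a hT m N (b n) - P m (b n)) atTop (𝓝 0) := by
  rcases eq_or_ne n m with rfl | hnm
  · -- n = m : eventually constant 0
    apply Tendsto.congr' _ tendsto_const_nhds
    filter_upwards [eventually_ge_atTop 1] with N hN
    have hPb : P n (b n) = b n := by
      rw [P_apply]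
      rw [show ⟪(b n : H), (b n : H)⟫_ℂ = 1 by
        rw [inner_self_eq_norm_sq_to_K, norm_b]; norm_num]
      rw [one_smul]
    have hAb : A a hT n N (b n) = b n := by
      rw [A_apply]
      have : ∀ k ∈ Finset.range N,
          ((starRingEnd ℂ) (lam a n)) ^ k • (U ^ k) (b n) = b n := by
        intro k _
        rw [U_pow_eig, smul_smul, ← mul_pow, conj_mul_lam, one_pow, one_smul]
      rw [Finset.sum_congr rfl this, Finset.sum_const, Finset.card_range]
      rw [← Nat.cast_smul_eq_nsmul ℂ, smul_smul, inv_mul_cancel₀, one_smul]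
      exact Nat.cast_ne_zero.mpr (by omega)
    rw [hAb, hPb, sub_self]
  · -- n ≠ m
    have hPb : P m (b n) = 0 := by
      rw [P_apply, fourierBasis.orthonormal.2 (Ne.symm hnm), zero_smul]
    set ρ : ℂ := (starRingEnd ℂ) (lam a m) * lam a n with hρ
    have hρ1 : ρ ≠ 1 := by
      have : ρ = lam a (n - m) := by
        rw [hρ, lam, lam, lam, ← fourier_neg, ← fourier_add, fourier_coe_apply,
          fourier_coe_apply]
        ring_nf
      rw [this]
      exact lam_ne_one a ha (sub_ne_zero.mpr hnm)
    have hρabs : ‖ρ‖ = 1 := by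
      rw [hρ, norm_mul, RCLike.norm_conj]
      show ‖_‖ * ‖_‖ = 1
      rw [abs_lam, abs_lam, one_mul]
    have hρpos : (0 : ℝ) < ‖ρ - 1‖ := by
      rw [norm_pos_iff]
      exact sub_ne_zero.mpr hρ1
    have hA : ∀ N, A a hT m N (b n)
        = ((N : ℂ)⁻¹ * ((ρ ^ N - 1) / (ρ - 1))) • b n := by
      intro N
      rw [A_apply]
      have : ∀ k ∈ Finset.range N,
          ((starRingEnd ℂ) (lam a m)) ^ k • (U ^ k) (b n) = ρ ^ k • b n := by
        intro k _
        rw [U_pow_eig, smul_smul, ← mul_pow]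
      rw [Finset.sum_congr rfl this, ← Finset.sum_smul, geom_sum_eq hρ1, smul_smul]
    simp only [hPb, sub_zero]
    apply squeeze_zero_norm (a := fun N : ℕ => 2 / ‖ρ - 1‖ / (N : ℝ))
    · intro N
      rw [hA, norm_smul, norm_b, mul_one, norm_mul, norm_inv, Complex.norm_natCast,
        norm_div]
      have hb2 : ‖ρ ^ N - 1‖ ≤ 2 := by
        calc ‖ρ ^ N - 1‖ ≤ ‖ρ ^ N‖ + ‖(1 : ℂ)‖ := norm_sub_le _ _
          _ = 2 := by rw [norm_pow, hρabs, one_pow, norm_one]; norm_num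
      calc (N : ℝ)⁻¹ * (‖ρ ^ N - 1‖ / ‖ρ - 1‖)
          ≤ (N : ℝ)⁻¹ * (2 / ‖ρ - 1‖) := by
            apply mul_le_mul_of_nonneg_left _ (by positivity)
            exact div_le_div_of_nonneg_right hb2 hρpos.le |>.trans_eq rfl
        _ = 2 / ‖ρ - 1‖ / (N : ℝ) := by ring
    · exact tendsto_const_div_atTop_nhds_zero_nat _

/-- The set of vectors where the ergodic averages converge to the projection. -/
def goodSet (m : ℤ) : Submodule ℂ H where
  carrier := {h : H | Tendsto (fun N => A a hT m N h - P m h) atTop (𝓝 0)}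
  zero_mem' := by
    simp only [Set.mem_setOf_eq, map_zero, sub_zero]
    exact tendsto_const_nhds
  add_mem' := by
    intro x y hx hy
    simp only [Set.mem_setOf_eq, map_add] at *
    have := hx.add hy
    rw [add_zero] at this
    refine this.congr fun N => ?_
    abel
  smul_mem' := by
    intro c x hx
    simp only [Set.mem_setOf_eq] at *
    have := hx.const_smul c
    rw [smul_zero] at this
    refine this.congr fun N => ?_
    simp [smul_sub]

lemma isClosed_goodSet (m : ℤ) : IsClosed (goodSet a hT m : Set H) := by
  rw [← closure_subset_iff_isClosed]
  intro h hh
  show Tendsto (fun N => A a hT m N h - P m h) atTop (𝓝 0)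
  rw [NormedAddCommGroup.tendsto_nhds_zero]
  intro ε hε
  obtain ⟨s, hs, hdist⟩ := Metric.mem_closure_iff.mp hh (ε / 3) (by positivity)
  have hsn : ‖h - s‖ < ε / 3 := by rwa [← dist_eq_norm]
  have hst : Tendsto (fun N => A a hT m N s - P m s) atTop (𝓝 0) := hs
  rw [NormedAddCommGroup.tendsto_nhds_zero] at hst
  filter_upwards [hst (ε / 3) (by positivity)] with N hN
  have heq : A a hT m N h - P m h
      = (A a hT m N s - P m s) + (A a hT m N (h - s) - P m (h - s)) := by
    rw [map_sub, map_sub]; abel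
  calc ‖A a hT m N h - P m h‖
      ≤ ‖A a hT m N s - P m s‖ + ‖A a hT m N (h - s) - P m (h - s)‖ := by
        rw [heq]; exact norm_add_le _ _
    _ ≤ ‖A a hT m N s - P m s‖ + (‖A a hT m N (h - s)‖ + ‖P m (h - s)‖) := by
        gcongr
        exact norm_sub_le _ _
    _ ≤ ‖A a hT m N s - P m s‖ + (‖h - s‖ + ‖h - s‖) := by
        gcongr
        · exact norm_A_le a hT m N (h - s)
        · exact norm_P_le m (h - s)
    _ < ε / 3 + (ε / 3 + ε / 3) := by gcongr
    _ = ε := by ring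

lemma key_tendsto (ha : Irrational a) (m : ℤ) (h : H) :
    Tendsto (fun N => A a hT m N h) atTop (𝓝 (P m h)) := by
  rw [← tendsto_sub_nhds_zero_iff]
  have hle : span ℂ (Set.range (b : ℤ → H)) ≤ goodSet a hT m := by
    rw [span_le]
    rintro _ ⟨n, rfl⟩
    exact A_tendsto_basis a hT ha m n
  have hdense : Dense (span ℂ (Set.range (b : ℤ → H)) : Set H) :=
    Submodule.dense_iff_topologicalClosure_eq_top.mpr fourierBasis.dense_span
  have : (closure (span ℂ (Set.range (b : ℤ → H)) : Set H)) ⊆ (goodSet a hT m : Set H) :=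
    closure_minimal hle (isClosed_goodSet a hT m)
  have hmem : h ∈ goodSet a hT m := this (by rw [hdense.closure_eq]; trivial)
  exact hmem

lemma cyclic_of_coeffs (ha : Irrational a) (g : H)
    (hg : ∀ n : ℤ, ⟪(b n : H), g⟫_ℂ ≠ 0) :
    IsCyclicVector (koopman (circleRotation a) hT) g := by
  rw [IsCyclicVector]
  set S := (span ℂ (Set.range fun k : ℕ => (U ^ k) g)).topologicalClosure with hS
  have hbm : ∀ m : ℤ, (b m : H) ∈ S := by
    intro m
    have hmem : ∀ N, A a hT m N g ∈ S := by
      intro N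
      apply Submodule.le_topologicalClosure
      rw [A_apply]
      refine Submodule.smul_mem _ _ (Submodule.sum_mem _ fun k _ => ?_)
      exact Submodule.smul_mem _ _ (Submodule.subset_span ⟨k, rfl⟩)
    have hPg : P m g ∈ S :=
      (Submodule.isClosed_topologicalClosure _).mem_of_tendsto
        (key_tendsto a hT ha m g) (Eventually.of_forall hmem)
    have : (⟪(b m : H), g⟫_ℂ)⁻¹ • (P m g) = b m := by
      rw [P_apply, smul_smul, inv_mul_cancel₀ (hg m), one_smul]
    rw [← this]
    exact Submodule.smul_mem _ _ hPg
  rw [eq_top_iff, ← fourierBasis.dense_span]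
  apply Submodule.topologicalClosure_minimal
  · rw [span_le]
    rintro _ ⟨m, rfl⟩
    exact hbm m
  · exact Submodule.isClosed_topologicalClosure _

/-- The dense `Gδ` set of candidate cyclic vectors. -/
def G : Set H := ⋂ n : ℤ, (fun g : H => ⟪(b n : H), g⟫_ℂ) ⁻¹' {(0 : ℂ)}ᶜ

lemma isOpen_piece (n : ℤ) : IsOpen ((fun g : H => ⟪(b n : H), g⟫_ℂ) ⁻¹' {(0 : ℂ)}ᶜ) :=
  isOpen_compl_singleton.preimage (innerSL ℂ (b n : H)).continuous

lemma dense_piece (n : ℤ) : Dense ((fun g : H => ⟪(b n : H), g⟫_ℂ) ⁻¹' {(0 : ℂ)}ᶜ) := by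
  rw [Metric.dense_iff]
  intro x r hr
  by_cases hx : ⟪(b n : H), x⟫_ℂ = 0
  · refine ⟨x + ((r / 2 : ℝ) : ℂ) • b n, ?_, ?_⟩
    · rw [Metric.mem_ball, dist_eq_norm, add_sub_cancel_left, norm_smul, norm_b, mul_one]
      rw [Complex.norm_real, Real.norm_eq_abs, abs_of_pos (by positivity)]
      linarith
    · simp only [Set.mem_preimage, Set.mem_compl_iff, Set.mem_singleton_iff]
      rw [inner_add_right, hx, inner_smul_right, zero_add,
        show ⟪(b n : H), (b n : H)⟫_ℂ = 1 by
          rw [inner_self_eq_norm_sq_to_K, norm_b]; norm_num, mul_one]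
      exact Complex.ofReal_ne_zero.mpr (by positivity)
  · exact ⟨x, Metric.mem_ball_self hr, hx⟩

lemma isGδ_G : IsGδ (G : Set H) :=
  IsGδ.iInter_of_isOpen isOpen_piece

lemma dense_G : Dense (G : Set H) :=
  dense_iInter_of_isOpen isOpen_piece dense_piece

lemma mem_G_iff (g : H) : g ∈ G ↔ ∀ n : ℤ, ⟪(b n : H), g⟫_ℂ ≠ 0 := by
  simp [G]

end CyclicAux

theorem aux_haar (a : ℝ) (ha : Irrational a) {μ' : Measure UnitAddCircle}
    (hμ : μ' = AddCircle.haarAddCircle)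
    (hT : MeasurePreserving (circleRotation a) μ' μ') :
    ∃ G : Set (Lp ℂ 2 μ'), IsGδ G ∧ Dense G ∧
      ∀ g ∈ G, IsCyclicVector (koopman (circleRotation a) hT) g := by
  subst hμ
  refine ⟨CyclicAux.G, CyclicAux.isGδ_G, CyclicAux.dense_G, fun g hg => ?_⟩
  exact CyclicAux.cyclic_of_coeffs a hT ha g ((CyclicAux.mem_G_iff g).mp hg)


/-- for an irrational rotation of the circle `S¹ = ℝ/ℤ` (with Lebesgue
measure), the set of cyclic vectors of the associated Koopman operator contains a dense
`Gδ` subset of `L²(S¹; ℂ)`. -/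
theorem circleRotation_cyclic_vectors_dense_Gdelta (a : ℝ) (ha : Irrational a) :
    ∃ G : Set (Lp ℂ 2 (volume : Measure UnitAddCircle)),
      IsGδ G ∧ Dense G ∧
      ∀ g ∈ G, IsCyclicVector
        (koopman (circleRotation a) (circleRotation_measurePreserving a)) g := by
  have hvol : (volume : Measure UnitAddCircle) = AddCircle.haarAddCircle := by
    rw [AddCircle.volume_eq_smul_haarAddCircle]
    norm_num
  exact aux_haar a ha hvol _
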